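/- Let L ∈ ℂ^{N×s}, let C ∈ ℂ^{N×N} be Hermitian positive definite, define P := L^H C^{−1} L, and assume P is invertible (equivalently, L has full column rank). With the MMSE combiner U := (L L^H + C)^{−1} L, the matrix U^H C U is invertible and det(I_s + (U^H C U)^{−1} U^H L L^H U) = det(I_s + L^H C^{−1} L). (MMSE combining is information-lossless: the post-combining achievable rate log det(I + (U^H C U)^{−1} U^H L L^H U) equals log det(I + L^H C^{−1} L).) -/

import Mathlib

open Matrix
open scoped ComplexOrder

/-- MMSE combining is information-lossless: with `C` Hermitian positive
definite, `P := Lᴴ C⁻¹ L` invertible and `U := (L Lᴴ + C)⁻¹ L`, the matrix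
`Uᴴ C U` is invertible and
`det(I + (Uᴴ C U)⁻¹ Uᴴ L Lᴴ U) = det(I + Lᴴ C⁻¹ L)`. -/
theorem stmt16 (N s : ℕ) (L : Matrix (Fin N) (Fin s) ℂ)
    (C : Matrix (Fin N) (Fin N) ℂ) (hC : C.PosDef)
    (hP : IsUnit (Lᴴ * C⁻¹ * L)) :
    IsUnit (((L * Lᴴ + C)⁻¹ * L)ᴴ * C * ((L * Lᴴ + C)⁻¹ * L)) ∧
    (1 + (((L * Lᴴ + C)⁻¹ * L)ᴴ * C * ((L * Lᴴ + C)⁻¹ * L))⁻¹ *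
        ((L * Lᴴ + C)⁻¹ * L)ᴴ * L * Lᴴ * ((L * Lᴴ + C)⁻¹ * L)).det
      = (1 + Lᴴ * C⁻¹ * L).det := by
  set M : Matrix (Fin N) (Fin N) ℂ := L * Lᴴ + C with hMdef
  set P : Matrix (Fin s) (Fin s) ℂ := Lᴴ * C⁻¹ * L with hPdef
  set S : Matrix (Fin s) (Fin s) ℂ := 1 + P with hSdef
  have hM : M.PosDef :=
    Matrix.PosDef.posSemidef_add (posSemidef_self_mul_conjTranspose L) hC
  have hMu : IsUnit M.det := (Matrix.isUnit_iff_isUnit_det M).mp hM.isUnit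
  have hCu : IsUnit C.det := (Matrix.isUnit_iff_isUnit_det C).mp hC.isUnit
  have hPsd : P.PosSemidef := hC.inv.posSemidef.conjTranspose_mul_mul_same L
  have hS : S.PosDef := Matrix.PosDef.one.add_posSemidef hPsd
  have hSu : IsUnit S.det := (Matrix.isUnit_iff_isUnit_det S).mp hS.isUnit
  have hPu : IsUnit P.det := (Matrix.isUnit_iff_isUnit_det P).mp hP
  -- basic inverse identities
  have hMM : M⁻¹ * M = 1 := Matrix.nonsing_inv_mul M hMu
  have hCC : C * C⁻¹ = 1 := Matrix.mul_nonsing_inv C hCu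
  have hSS : S * S⁻¹ = 1 := Matrix.mul_nonsing_inv S hSu
  have hSS' : S⁻¹ * S = 1 := Matrix.nonsing_inv_mul S hSu
  have hPP : P⁻¹ * P = 1 := Matrix.nonsing_inv_mul P hPu
  -- key identity : C⁻¹ * L = M⁻¹ * L * S
  have key : C⁻¹ * L = M⁻¹ * (L * S) := by
    have h1 : M * (C⁻¹ * L) = L * S := by
      rw [hMdef, hSdef, hPdef, Matrix.add_mul, Matrix.mul_add, Matrix.mul_one,
        ← Matrix.mul_assoc C, hCC, Matrix.one_mul, add_comm]
      simp only [Matrix.mul_assoc]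
    rw [← Matrix.one_mul (C⁻¹ * L), ← hMM, Matrix.mul_assoc, h1]
  -- Q := Lᴴ * M⁻¹ * L satisfies Q * S = P
  set Q : Matrix (Fin s) (Fin s) ℂ := Lᴴ * M⁻¹ * L with hQdef
  have hQS : Q * S = P := by
    rw [hQdef, hPdef]
    simp only [Matrix.mul_assoc]
    rw [key]
  have hQ : Q = P * S⁻¹ := by
    rw [← hQS, mul_assoc, hSS, mul_one]
  -- U and its conjugate transpose
  have hUH : (M⁻¹ * L)ᴴ = Lᴴ * M⁻¹ := by
    rw [Matrix.conjTranspose_mul, Matrix.conjTranspose_nonsing_inv, hM.isHermitian.eq]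
  have hCeq : C = M - L * Lᴴ := by rw [hMdef, add_sub_cancel_left]
  -- E1 = Uᴴ C U = Q - Q * Q
  have hE1 : (M⁻¹ * L)ᴴ * C * (M⁻¹ * L) = Q - Q * Q := by
    rw [hUH, hQdef, hCeq, Matrix.mul_sub, Matrix.sub_mul,
      Matrix.mul_assoc Lᴴ M⁻¹ M, hMM, Matrix.mul_one]
    simp only [Matrix.mul_assoc]
  -- 1 - Q = S⁻¹, so E1 = P * S⁻¹ * S⁻¹
  have h1Q : (1 : Matrix (Fin s) (Fin s) ℂ) - Q = S⁻¹ := by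
    calc (1 : Matrix (Fin s) (Fin s) ℂ) - Q = S * S⁻¹ - P * S⁻¹ := by rw [hSS, hQ]
      _ = (S - P) * S⁻¹ := by rw [sub_mul]
      _ = S⁻¹ := by rw [hSdef, add_sub_cancel_right, one_mul]
  have hE1' : Q - Q * Q = P * S⁻¹ * S⁻¹ := by
    calc Q - Q * Q = Q * (1 - Q) := by rw [mul_sub, mul_one]
      _ = P * S⁻¹ * S⁻¹ := by rw [h1Q, hQ]
  -- commutation of P and S⁻¹
  have hcomm : P * S⁻¹ = S⁻¹ * P := by
    have h : S * P = P * S := by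
      rw [hSdef, add_mul, mul_add, one_mul, mul_one]
    calc P * S⁻¹ = S⁻¹ * (S * (P * S⁻¹)) := by rw [← mul_assoc, hSS', one_mul]
      _ = S⁻¹ * (P * (S * S⁻¹)) := by rw [← mul_assoc S P, h, mul_assoc]
      _ = S⁻¹ * P := by rw [hSS, mul_one]
  have hSiu : IsUnit S⁻¹.det := by
    rw [Matrix.det_nonsing_inv]; exact isUnit_ringInverse.mpr hSu
  have hE1unit : IsUnit ((M⁻¹ * L)ᴴ * C * (M⁻¹ * L)) := by
    rw [hE1, hE1', hcomm, Matrix.isUnit_iff_isUnit_det]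
    simpa [Matrix.det_mul] using (hSiu.mul hPu).mul hSiu
  refine ⟨hE1unit, ?_⟩
  -- E2 = Uᴴ L Lᴴ U = Q * Q
  have hE2 : (M⁻¹ * L)ᴴ * L * Lᴴ * (M⁻¹ * L) = Q * Q := by
    rw [hUH, hQdef]
    simp only [Matrix.mul_assoc]
  -- inverse of E1
  have hE1inv : ((M⁻¹ * L)ᴴ * C * (M⁻¹ * L))⁻¹ = S * (S * P⁻¹) := by
    rw [hE1, hE1', Matrix.mul_inv_rev, Matrix.mul_inv_rev,
      Matrix.nonsing_inv_nonsing_inv S hSu]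
  -- final computation
  have hassoc : ((M⁻¹ * L)ᴴ * C * (M⁻¹ * L))⁻¹ * (M⁻¹ * L)ᴴ * L * Lᴴ * (M⁻¹ * L)
      = ((M⁻¹ * L)ᴴ * C * (M⁻¹ * L))⁻¹ * ((M⁻¹ * L)ᴴ * L * Lᴴ * (M⁻¹ * L)) := by
    simp only [Matrix.mul_assoc]
  have hfinal : ((M⁻¹ * L)ᴴ * C * (M⁻¹ * L))⁻¹ * (M⁻¹ * L)ᴴ * L * Lᴴ * (M⁻¹ * L)
      = P := by
    rw [hassoc, hE2, hE1inv, hQ]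
    calc S * (S * P⁻¹) * (P * S⁻¹ * (P * S⁻¹))
        = S * S * (P⁻¹ * P) * S⁻¹ * P * S⁻¹ := by noncomm_ring
      _ = S * (S * S⁻¹) * P * S⁻¹ := by rw [hPP]; noncomm_ring
      _ = S * P * S⁻¹ := by rw [hSS]; noncomm_ring
      _ = S * S⁻¹ * P := by rw [mul_assoc, hcomm, ← mul_assoc]
      _ = P := by rw [hSS, one_mul]
  rw [hfinal, ← hSdef]
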